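/- Let A be an associative ℂ-algebra, let q ∈ ℂ with q ≠ 0 and q² ≠ −1, and set λ = q − q⁻¹. Let a, b, c, d ∈ A, let T = [[a,b],[c,d]], and let R = [[q,0,0,0],[0,1,0,0],[0,λ,1,0],[0,0,0,−q⁻¹]]. If the RTT relation R·(T ⊗ I₂)·(I₂ ⊗ T) = (I₂ ⊗ T)·(T ⊗ I₂)·R holds (as 4×4 matrices over A, tensor product being the Kronecker product), then the generators satisfy the exotic quantum group relations: b² = 0, c² = 0, bc = cb, ac = qca, db = −qbd, dc = −qcd, and ad − da = λbc. -/

import Mathlib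

open Matrix Kronecker

/-- The matrix (5) of the paper with `λ = q - q⁻¹` and lower-right entry `ζ`,
indexed by `Fin 2 × Fin 2` (basis ordering e₁⊗e₁, e₁⊗e₂, e₂⊗e₁, e₂⊗e₂). -/
noncomputable def Rmat (q ζ : ℂ) : Matrix (Fin 2 × Fin 2) (Fin 2 × Fin 2) ℂ :=
  Matrix.of fun p r =>
    if p = ((0 : Fin 2), (0 : Fin 2)) ∧ r = ((0 : Fin 2), (0 : Fin 2)) then q
    else if p = ((0 : Fin 2), (1 : Fin 2)) ∧ r = ((0 : Fin 2), (1 : Fin 2)) then 1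
    else if p = ((1 : Fin 2), (0 : Fin 2)) ∧ r = ((0 : Fin 2), (1 : Fin 2)) then q - q⁻¹
    else if p = ((1 : Fin 2), (0 : Fin 2)) ∧ r = ((1 : Fin 2), (0 : Fin 2)) then 1
    else if p = ((1 : Fin 2), (1 : Fin 2)) ∧ r = ((1 : Fin 2), (1 : Fin 2)) then ζ
    else 0

/-- If the RTT relation `R T₁ T₂ = T₂ T₁ R` holds for the exotic R-matrix
(ζ = -q⁻¹), then the generators satisfy the exotic quantum group
G̃L_q(2) relations. -/
theorem RTT_exotic_implies_relations
    {A : Type*} [Ring A] [Algebra ℂ A] (q : ℂ) (hq : q ≠ 0) (hq2 : q ^ 2 ≠ -1)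
    (a b c d : A)
    (T : Matrix (Fin 2) (Fin 2) A) (hT : T = !![a, b; c, d])
    (hRTT : (Rmat q (-q⁻¹)).map (algebraMap ℂ A) *
        (T ⊗ₖ (1 : Matrix (Fin 2) (Fin 2) A)) *
        ((1 : Matrix (Fin 2) (Fin 2) A) ⊗ₖ T) =
      ((1 : Matrix (Fin 2) (Fin 2) A) ⊗ₖ T) *
        (T ⊗ₖ (1 : Matrix (Fin 2) (Fin 2) A)) *
        (Rmat q (-q⁻¹)).map (algebraMap ℂ A)) :
    b * b = 0 ∧ c * c = 0 ∧ b * c = c * b ∧ a * c = q • (c * a) ∧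
      d * b = (-q) • (b * d) ∧ d * c = (-q) • (c * d) ∧
      a * d - d * a = (q - q⁻¹) • (b * c) := by
  subst hT
  have key : ∀ (s : ℂ) (x : A), x * algebraMap ℂ A s = s • x := fun s x => by
    rw [Algebra.smul_def, Algebra.commutes]
  have key2 : ∀ (s : ℂ) (x : A), algebraMap ℂ A s * x = s • x := fun s x =>
    (Algebra.smul_def s x).symm
  have hqq : q + q⁻¹ ≠ 0 := by
    intro h
    apply hq2
    field_simp at h
    linear_combination h
  have hbb := congrFun (congrFun hRTT ((0:Fin 2),(0:Fin 2))) ((1:Fin 2),(1:Fin 2))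
  have hac := congrFun (congrFun hRTT ((0:Fin 2),(1:Fin 2))) ((0:Fin 2),(0:Fin 2))
  have hbc := congrFun (congrFun hRTT ((0:Fin 2),(1:Fin 2))) ((1:Fin 2),(0:Fin 2))
  have hbd := congrFun (congrFun hRTT ((0:Fin 2),(1:Fin 2))) ((1:Fin 2),(1:Fin 2))
  have had := congrFun (congrFun hRTT ((1:Fin 2),(0:Fin 2))) ((1:Fin 2),(0:Fin 2))
  have hcc := congrFun (congrFun hRTT ((1:Fin 2),(1:Fin 2))) ((0:Fin 2),(0:Fin 2))
  have hdc := congrFun (congrFun hRTT ((1:Fin 2),(1:Fin 2))) ((1:Fin 2),(0:Fin 2))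
  simp [Rmat, Matrix.mul_apply, Matrix.map_apply, Fintype.sum_prod_type,
    Fin.sum_univ_two, Matrix.one_apply, Prod.ext_iff, kroneckerMap_apply,
    Matrix.of_apply, Matrix.cons_val', Matrix.cons_val_zero, Matrix.cons_val_one,
    Matrix.head_cons, Matrix.head_fin_const, Matrix.empty_val',
    Matrix.cons_val_fin_one] at hbb hac hbc hbd had hcc hdc
  simp only [key, key2, smul_mul_assoc, mul_smul_comm, smul_smul, _root_.map_sub, _root_.map_one,
    sub_mul, mul_sub, one_mul, mul_one, zero_mul, mul_zero, add_zero, zero_add,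
    smul_zero, zero_smul, one_smul, neg_mul, mul_neg, neg_neg, _root_.map_neg,
    neg_smul, smul_neg] at hbb hac hbc hbd had hcc hdc
  refine ⟨?_, ?_, hbc, hac, ?_, ?_, ?_⟩
  · have h : (q + q⁻¹) • (b * b) = 0 := by
      rw [add_smul, hbb, neg_add_cancel]
    calc b * b = (q + q⁻¹)⁻¹ • ((q + q⁻¹) • (b * b)) := (inv_smul_smul₀ hqq _).symm
      _ = 0 := by rw [h, smul_zero]
  · have h : (q + q⁻¹) • (c * c) = 0 := by
      rw [add_smul, ← hcc, neg_add_cancel]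
    calc c * c = (q + q⁻¹)⁻¹ • ((q + q⁻¹) • (c * c)) := (inv_smul_smul₀ hqq _).symm
      _ = 0 := by rw [h, smul_zero]
  · have h1 : q⁻¹ • (d * b) = -(b * d) := by rw [hbd, neg_neg]
    calc d * b = (q * q⁻¹) • (d * b) := by rw [mul_inv_cancel₀ hq, one_smul]
      _ = q • (q⁻¹ • (d * b)) := (smul_smul _ _ _).symm
      _ = (-q) • (b * d) := by rw [h1, smul_neg, neg_smul]
  · have h1 : q⁻¹ • (d * c) = -(c * d) := by rw [← hdc, neg_neg]
    calc d * c = (q * q⁻¹) • (d * c) := by rw [mul_inv_cancel₀ hq, one_smul]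
      _ = q • (q⁻¹ • (d * c)) := (smul_smul _ _ _).symm
      _ = (-q) • (c * d) := by rw [h1, smul_neg, neg_smul]
  · rw [sub_smul, ← had]
    abel
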